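/- For every w ∈ ℂ with w ∉ {−1, −2, −3, …}, the series R(w,t) = e^{wt}·Σ_{d≥0} a_d(w)·e^{dt} converges absolutely for every t ∈ H, the function t ↦ R(w,t) is holomorphic on H, and for all t ∈ H it satisfies D⁴R(w,t) − 729·e^t·((D + 1/3)∘(D + 1/3)∘(D + 2/3)∘(D + 2/3))R(w,t) = w⁴·e^{wt}, where D denotes differentiation d/dt in t and (D + c)f = f′ + c·f. -/

import Mathlib

/-- `a_d(w) = (∏_{r=1}^{3d} (3w+r)²) / (∏_{r=1}^{d} (w+r)⁶)`. -/
noncomputable def aFun (d : ℕ) (w : ℂ) : ℂ :=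
  (∏ r ∈ Finset.Icc 1 (3 * d), (3 * w + (r : ℂ)) ^ 2) /
    (∏ r ∈ Finset.Icc 1 d, (w + (r : ℂ)) ^ 6)

/-- `H = {t ∈ ℂ : Re t < −6·log 3}`, so that `729·|e^t| < 1` on `H`. -/
def Hset : Set ℂ := {t : ℂ | t.re < -6 * Real.log 3}

/-- `R(w,t) = e^{wt}·Σ_{d≥0} a_d(w)·e^{dt}`. -/
noncomputable def Rfun (w : ℂ) : ℂ → ℂ :=
  fun t => Complex.exp (w * t) * ∑' d : ℕ, aFun d w * Complex.exp (d * t)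

/-- The operator `(D + c)f = f′ + c·f`, where `D = d/dt`. -/
noncomputable def DOp (c : ℂ) (f : ℂ → ℂ) : ℂ → ℂ :=
  fun t => deriv f t + c * f t

/-! ### auxiliary lemmas -/

lemma aFun_zero' (w : ℂ) : aFun 0 w = 1 := by simp [aFun]

lemma wr_ne (w : ℂ) (hw : ∀ n : ℕ, w ≠ -((n : ℂ) + 1)) (r : ℕ) (hr : 1 ≤ r) :
    w + (r : ℂ) ≠ 0 := by
  intro h
  obtain ⟨m, rfl⟩ := Nat.exists_eq_add_of_le hr
  apply hw m
  push_cast at h ⊢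
  linear_combination h

lemma aFun_succ (w : ℂ) (d : ℕ) :
    aFun (d + 1) w = aFun d w *
      ((3 * w + (3 * (d : ℂ) + 1)) ^ 2 * (3 * w + (3 * (d : ℂ) + 2)) ^ 2 *
        (3 * w + (3 * (d : ℂ) + 3)) ^ 2 / (w + ((d : ℂ) + 1)) ^ 6) := by
  have h1 : 3 * (d + 1) = (3 * d + 1) + 1 + 1 := by ring
  have hnum : (∏ r ∈ Finset.Icc 1 (3 * (d + 1)), (3 * w + (r : ℂ)) ^ 2) =
      (∏ r ∈ Finset.Icc 1 (3 * d), (3 * w + (r : ℂ)) ^ 2) *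
        ((3 * w + (3 * (d : ℂ) + 1)) ^ 2 * (3 * w + (3 * (d : ℂ) + 2)) ^ 2 *
          (3 * w + (3 * (d : ℂ) + 3)) ^ 2) := by
    rw [h1, Finset.prod_Icc_succ_top (by omega), Finset.prod_Icc_succ_top (by omega),
      Finset.prod_Icc_succ_top (by omega)]
    push_cast
    ring
  have hden : (∏ r ∈ Finset.Icc 1 (d + 1), (w + (r : ℂ)) ^ 6) =
      (∏ r ∈ Finset.Icc 1 d, (w + (r : ℂ)) ^ 6) * (w + ((d : ℂ) + 1)) ^ 6 := by
    rw [Finset.prod_Icc_succ_top (by omega)]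
    push_cast
    ring
  rw [aFun, aFun, hnum, hden]
  rw [div_mul_div_comm]

lemma aFun_rec4 (w : ℂ) (hw : ∀ n : ℕ, w ≠ -((n : ℂ) + 1)) (d : ℕ) :
    aFun (d + 1) w * (w + ((d : ℂ) + 1)) ^ 4 =
      729 * aFun d w * ((w + (d : ℂ)) + 1/3) ^ 2 * ((w + (d : ℂ)) + 2/3) ^ 2 := by
  have hne : w + ((d : ℂ) + 1) ≠ 0 := by
    have := wr_ne w hw (d + 1) (by omega)
    push_cast at this
    intro h; exact this (by linear_combination h)
  have h6 : (w + ((d : ℂ) + 1)) ^ 6 ≠ 0 := pow_ne_zero _ hne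
  rw [aFun_succ w d]
  field_simp
  ring

/-- The one-step ratio of `aFun`. -/
noncomputable def cRat (w : ℂ) (d : ℕ) : ℂ :=
  (3 * w + (3 * (d : ℂ) + 1)) ^ 2 * (3 * w + (3 * (d : ℂ) + 2)) ^ 2 *
    (3 * w + (3 * (d : ℂ) + 3)) ^ 2 / (w + ((d : ℂ) + 1)) ^ 6

lemma cRat_tendsto (w : ℂ) (hw : ∀ n : ℕ, w ≠ -((n : ℂ) + 1)) :
    Filter.Tendsto (fun d : ℕ => ‖cRat w d‖) Filter.atTop (nhds 729) := by
  set F : ℂ → ℂ := fun z =>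
    (3 + (3 * w - 2) * z) ^ 2 * (3 + (3 * w - 1) * z) ^ 2 * (3 + 3 * w * z) ^ 2 /
      (1 + w * z) ^ 6 with hF
  have hδ0 : Filter.Tendsto (fun d : ℕ => ((d : ℂ) + 1)⁻¹) Filter.atTop (nhds 0) := by
    rw [tendsto_zero_iff_norm_tendsto_zero]
    have : (fun d : ℕ => ‖((d : ℂ) + 1)⁻¹‖) = fun d : ℕ => 1 / ((d : ℝ) + 1) := by
      funext d
      rw [norm_inv, one_div]
      congr 1
      rw [show ((d : ℂ) + 1) = ((d + 1 : ℕ) : ℂ) by push_cast; ring, Complex.norm_natCast]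
      push_cast; ring
    rw [this]
    exact tendsto_one_div_add_atTop_nhds_zero_nat
  have hcont : ContinuousAt F 0 := by
    apply ContinuousAt.div
    · fun_prop
    · fun_prop
    · norm_num
  have hF0 : F 0 = 729 := by simp [hF]; norm_num
  have key : Filter.Tendsto (fun d : ℕ => cRat w d) Filter.atTop (nhds 729) := by
    rw [← hF0]
    have := (hcont.tendsto).comp hδ0
    apply this.congr
    intro d
    have hd1 : ((d : ℂ) + 1) ≠ 0 := Nat.cast_add_one_ne_zero d
    have hwd : w + ((d : ℂ) + 1) ≠ 0 := by
      have := wr_ne w hw (d + 1) (by omega)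
      intro h; apply this; push_cast; linear_combination h
    show F (((d : ℂ) + 1)⁻¹) = cRat w d
    rw [hF, cRat]
    beta_reduce
    have h1 : (1 + w * ((d : ℂ) + 1)⁻¹) = (w + ((d : ℂ) + 1)) * ((d : ℂ) + 1)⁻¹ := by
      field_simp; ring
    have h2 : (3 + (3 * w - 2) * ((d : ℂ) + 1)⁻¹) =
        (3 * w + (3 * (d : ℂ) + 1)) * ((d : ℂ) + 1)⁻¹ := by field_simp; ring
    have h3 : (3 + (3 * w - 1) * ((d : ℂ) + 1)⁻¹) =
        (3 * w + (3 * (d : ℂ) + 2)) * ((d : ℂ) + 1)⁻¹ := by field_simp; ring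
    have h4 : (3 + 3 * w * ((d : ℂ) + 1)⁻¹) =
        (3 * w + (3 * (d : ℂ) + 3)) * ((d : ℂ) + 1)⁻¹ := by field_simp; ring
    rw [h1, h2, h3, h4]
    have h6 : (((d : ℂ) + 1)⁻¹) ^ 6 ≠ 0 := pow_ne_zero _ (inv_ne_zero hd1)
    rw [show ((3 * w + (3 * (d : ℂ) + 1)) * ((d : ℂ) + 1)⁻¹) ^ 2 *
          ((3 * w + (3 * (d : ℂ) + 2)) * ((d : ℂ) + 1)⁻¹) ^ 2 *
          ((3 * w + (3 * (d : ℂ) + 3)) * ((d : ℂ) + 1)⁻¹) ^ 2 =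
        (3 * w + (3 * (d : ℂ) + 1)) ^ 2 * (3 * w + (3 * (d : ℂ) + 2)) ^ 2 *
          (3 * w + (3 * (d : ℂ) + 3)) ^ 2 * (((d : ℂ) + 1)⁻¹) ^ 6 from by ring,
      show ((w + ((d : ℂ) + 1)) * ((d : ℂ) + 1)⁻¹) ^ 6 =
        (w + ((d : ℂ) + 1)) ^ 6 * (((d : ℂ) + 1)⁻¹) ^ 6 from by ring,
      mul_div_mul_right _ _ h6]
  have := key.norm
  simpa using this

lemma summable_u (w : ℂ) (hw : ∀ n : ℕ, w ≠ -((n : ℂ) + 1)) (k : ℕ) {q : ℝ}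
    (hq : 0 < q) (hq' : 729 * q < 1) :
    Summable (fun d : ℕ => ‖aFun d w‖ * ((d : ℝ) + 1) ^ k * q ^ d) := by
  set r : ℝ := (729 * q + 1) / 2 with hr
  have hrq : 729 * q < r := by rw [hr]; linarith
  have hr1 : r < 1 := by rw [hr]; linarith
  have hβ : Filter.Tendsto (fun d : ℕ => (((d : ℝ) + 2) / ((d : ℝ) + 1)) ^ k)
      Filter.atTop (nhds 1) := by
    have h1 : Filter.Tendsto (fun d : ℕ => ((d : ℝ) + 2) / ((d : ℝ) + 1))
        Filter.atTop (nhds 1) := by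
      have := tendsto_one_div_add_atTop_nhds_zero_nat (𝕜 := ℝ)
      have h2 : Filter.Tendsto (fun d : ℕ => 1 + 1 / ((d : ℝ) + 1)) Filter.atTop
          (nhds 1) := by simpa using tendsto_const_nhds.add this
      apply h2.congr
      intro d
      have : ((d : ℝ) + 1) ≠ 0 := by positivity
      field_simp
      ring
    have := h1.pow k
    simpa using this
  have hγ : Filter.Tendsto
      (fun d : ℕ => ‖cRat w d‖ * (((d : ℝ) + 2) / ((d : ℝ) + 1)) ^ k * q)
      Filter.atTop (nhds (729 * q)) := by
    have := ((cRat_tendsto w hw).mul hβ).mul_const q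
    simpa using this
  have hev : ∀ᶠ d in Filter.atTop,
      ‖cRat w d‖ * (((d : ℝ) + 2) / ((d : ℝ) + 1)) ^ k * q ≤ r :=
    (hγ.eventually_le_const hrq)
  apply summable_of_ratio_norm_eventually_le hr1
  filter_upwards [hev] with d hd
  have hu1 : ((d : ℝ) + 1) ≠ 0 := by positivity
  have hnorm : ‖aFun (d + 1) w‖ = ‖aFun d w‖ * ‖cRat w d‖ := by
    rw [aFun_succ w d, norm_mul]; rfl
  have hnn : (0:ℝ) ≤ ‖aFun d w‖ * ((d : ℝ) + 1) ^ k * q ^ d := by positivity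
  have hnn2 : (0:ℝ) ≤ ‖aFun (d+1) w‖ * (((d+1 : ℕ) : ℝ) + 1) ^ k * q ^ (d+1) := by positivity
  rw [Real.norm_of_nonneg hnn2, Real.norm_of_nonneg hnn]
  have step : ‖aFun (d+1) w‖ * (((d+1 : ℕ) : ℝ) + 1) ^ k * q ^ (d+1) =
      (‖cRat w d‖ * (((d : ℝ) + 2) / ((d : ℝ) + 1)) ^ k * q) *
        (‖aFun d w‖ * ((d : ℝ) + 1) ^ k * q ^ d) := by
    rw [hnorm]
    push_cast
    rw [div_pow]
    field_simp
    ring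
  rw [step]
  exact mul_le_mul_of_nonneg_right hd hnn

/-- the `k`-th "derivative series" of `R(w,·)`. -/
noncomputable def Sfun (w : ℂ) (k : ℕ) (t : ℂ) : ℂ :=
  ∑' d : ℕ, aFun d w * (w + (d : ℂ)) ^ k * Complex.exp ((w + (d : ℂ)) * t)

lemma term_norm (w : ℂ) (k d : ℕ) (x : ℂ) :
    ‖aFun d w * (w + (d : ℂ)) ^ k * Complex.exp ((w + (d : ℂ)) * x)‖ =
      ‖aFun d w‖ * ‖w + (d : ℂ)‖ ^ k *
        (Real.exp ((w * x).re) * Real.exp x.re ^ d) := by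
  rw [norm_mul, norm_mul, norm_pow,
    show ‖Complex.exp ((w + (d : ℂ)) * x)‖ = Real.exp (((w + (d : ℂ)) * x).re) from by
      rw [Complex.norm_exp]]
  congr 1
  rw [show (w + (d : ℂ)) * x = w * x + (d : ℂ) * x from by ring]
  rw [Complex.add_re, Real.exp_add]
  congr 1
  rw [show ((d : ℂ) * x).re = (d : ℝ) * x.re from by
    rw [show ((d : ℂ)) = (((d : ℝ) : ℂ)) from by push_cast; rfl, Complex.re_ofReal_mul]]
  exact Real.exp_nat_mul _ d

lemma term_le (w : ℂ) (k d : ℕ) {x : ℂ} {c M : ℝ} (hx : x.re ≤ c) (hM : ‖x‖ ≤ M) :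
    ‖aFun d w * (w + (d : ℂ)) ^ k * Complex.exp ((w + (d : ℂ)) * x)‖ ≤
      ‖aFun d w‖ * ((‖w‖ + 1) * ((d : ℝ) + 1)) ^ k *
        (Real.exp (‖w‖ * M) * Real.exp c ^ d) := by
  rw [term_norm]
  have h1 : ‖w + (d : ℂ)‖ ≤ (‖w‖ + 1) * ((d : ℝ) + 1) := by
    calc ‖w + (d : ℂ)‖ ≤ ‖w‖ + ‖(d : ℂ)‖ := norm_add_le _ _
    _ = ‖w‖ + (d : ℝ) := by rw [Complex.norm_natCast]
    _ ≤ (‖w‖ + 1) * ((d : ℝ) + 1) := by nlinarith [norm_nonneg w, Nat.cast_nonneg (α := ℝ) d]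
  have h2 : (w * x).re ≤ ‖w‖ * M := by
    calc (w * x).re ≤ ‖w * x‖ := Complex.re_le_norm _
    _ = ‖w‖ * ‖x‖ := by rw [norm_mul]
    _ ≤ ‖w‖ * M := by
        exact mul_le_mul_of_nonneg_left hM (norm_nonneg w)
  have h3 : Real.exp x.re ≤ Real.exp c := Real.exp_le_exp.mpr hx
  gcongr <;> first
    | exact norm_nonneg _
    | positivity
    | exact h1
    | exact Real.exp_le_exp.mpr h2
    | exact h3

lemma exp_729 {c : ℝ} (hc : c < -6 * Real.log 3) : 729 * Real.exp c < 1 := by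
  have h3 : Real.log 729 = 6 * Real.log 3 := by
    rw [show (729 : ℝ) = 3 ^ (6 : ℕ) from by norm_num, Real.log_pow]
    push_cast; ring
  have h2 : Real.exp c < Real.exp (Real.log (1 / 729)) := by
    apply Real.exp_lt_exp.mpr
    rw [Real.log_div one_ne_zero (by norm_num), Real.log_one, h3]
    linarith
  rw [Real.exp_log (by norm_num)] at h2
  linarith

lemma hopen : IsOpen Hset := by
  exact isOpen_lt Complex.continuous_re continuous_const

lemma summable_term (w : ℂ) (hw : ∀ n : ℕ, w ≠ -((n : ℂ) + 1)) (k : ℕ) {x : ℂ}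
    {c M : ℝ} (hc : c < -6 * Real.log 3) (hx : x.re ≤ c) (hM : ‖x‖ ≤ M) :
    Summable (fun d : ℕ =>
      ‖aFun d w‖ * ((‖w‖ + 1) * ((d : ℝ) + 1)) ^ k *
        (Real.exp (‖w‖ * M) * Real.exp c ^ d)) := by
  have h := (summable_u w hw k (Real.exp_pos c) (exp_729 hc)).mul_left
    ((‖w‖ + 1) ^ k * Real.exp (‖w‖ * M))
  apply h.congr
  intro d
  rw [mul_pow]
  ring

lemma hasDerivAt_Sfun (w : ℂ) (hw : ∀ n : ℕ, w ≠ -((n : ℂ) + 1)) (k : ℕ) {t : ℂ}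
    (ht : t ∈ Hset) : HasDerivAt (Sfun w k) (Sfun w (k + 1) t) t := by
  set ε : ℝ := (-6 * Real.log 3 - t.re) / 2 with hε
  have htH : t.re < -6 * Real.log 3 := ht
  have hεpos : 0 < ε := by rw [hε]; linarith
  set c : ℝ := t.re + ε with hc
  have hcH : c < -6 * Real.log 3 := by rw [hc, hε]; linarith
  set M : ℝ := ‖t‖ + ε with hM
  have hball : ∀ y ∈ Metric.ball t ε, y.re ≤ c ∧ ‖y‖ ≤ M := by
    intro y hy
    rw [Metric.mem_ball, dist_eq_norm] at hy
    constructor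
    · have : |(y - t).re| ≤ ‖y - t‖ := by
        exact Complex.abs_re_le_norm _
      rw [Complex.sub_re] at this
      have := (abs_le.mp this).2
      rw [hc]; linarith
    · calc ‖y‖ = ‖t + (y - t)‖ := by ring_nf
      _ ≤ ‖t‖ + ‖y - t‖ := norm_add_le _ _
      _ ≤ M := by rw [hM]; linarith
  have htc : t.re ≤ c := by rw [hc]; linarith
  have hMt : ‖t‖ ≤ M := by rw [hM]; linarith
  exact hasDerivAt_tsum_of_isPreconnected
    (u := fun d : ℕ => ‖aFun d w‖ * ((‖w‖ + 1) * ((d : ℝ) + 1)) ^ (k + 1) *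
      (Real.exp (‖w‖ * M) * Real.exp c ^ d))
    (g := fun (d : ℕ) (y : ℂ) => aFun d w * (w + (d : ℂ)) ^ k *
      Complex.exp ((w + (d : ℂ)) * y))
    (g' := fun (d : ℕ) (y : ℂ) => aFun d w * (w + (d : ℂ)) ^ (k + 1) *
      Complex.exp ((w + (d : ℂ)) * y))
    (summable_term w hw (k + 1) hcH htc hMt)
    Metric.isOpen_ball (convex_ball t ε).isPreconnected
    (fun d y _ => by
      have h0 : HasDerivAt (fun y : ℂ => (w + (d : ℂ)) * y) (w + (d : ℂ)) y := by
        simpa using (hasDerivAt_id y).const_mul (w + (d : ℂ))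
      have h1 := (h0.cexp).const_mul (aFun d w * (w + (d : ℂ)) ^ k)
      convert h1 using 1
      all_goals first | rfl | ring)
    (fun d y hy => term_le w (k + 1) d (hball y hy).1 (hball y hy).2)
    (Metric.mem_ball_self hεpos)
    (Summable.of_norm (Summable.of_nonneg_of_le (fun d => norm_nonneg _)
      (fun d => term_le w k d htc hMt) (summable_term w hw k hcH htc hMt)))
    (Metric.mem_ball_self hεpos)

lemma Rfun_eq_Sfun (w : ℂ) : Rfun w = Sfun w 0 := by
  funext t
  rw [Rfun, Sfun, ← tsum_mul_left]
  congr 1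
  funext d
  rw [pow_zero, mul_one, add_mul, Complex.exp_add]
  ring

lemma summable_term_at (w : ℂ) (hw : ∀ n : ℕ, w ≠ -((n : ℂ) + 1)) (k : ℕ) {t : ℂ}
    (ht : t ∈ Hset) :
    Summable (fun d : ℕ => aFun d w * (w + (d : ℂ)) ^ k * Complex.exp ((w + (d : ℂ)) * t)) := by
  exact Summable.of_norm (Summable.of_nonneg_of_le (fun d => norm_nonneg _)
    (fun d => term_le w k d (le_refl t.re) (le_refl ‖t‖))
    (summable_term w hw k ht (le_refl t.re) (le_refl ‖t‖)))

/-- For `w` not a negative integer: the series defining `R(w,·)` converges absolutely on `H`,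
`t ↦ R(w,t)` is holomorphic on `H`, and it satisfies
`D⁴R − 729·e^t·(D+1/3)²(D+2/3)²R = w⁴·e^{wt}` on `H`. -/
theorem Rfun_picard_fuchs (w : ℂ) (hw : ∀ n : ℕ, w ≠ -((n : ℂ) + 1)) :
    (∀ t ∈ Hset, Summable fun d : ℕ => ‖aFun d w * Complex.exp (d * t)‖) ∧
    DifferentiableOn ℂ (Rfun w) Hset ∧
    (∀ t ∈ Hset,
      deriv (deriv (deriv (deriv (Rfun w)))) t -
          729 * Complex.exp t *
            (DOp (1 / 3) (DOp (1 / 3) (DOp (2 / 3) (DOp (2 / 3) (Rfun w))))) t =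
        w ^ 4 * Complex.exp (w * t)) := by
  have hS : ∀ (k : ℕ) {t : ℂ}, t ∈ Hset → HasDerivAt (Sfun w k) (Sfun w (k + 1) t) t :=
    fun k {t} ht => hasDerivAt_Sfun w hw k ht
  have hRS : Rfun w = Sfun w 0 := Rfun_eq_Sfun w
  refine ⟨?_, ?_, ?_⟩
  · -- summability
    intro t ht
    have h := summable_u w hw 0 (Real.exp_pos t.re) (exp_729 ht)
    refine h.congr fun d => ?_
    rw [pow_zero, mul_one, norm_mul]
    congr 1
    rw [show ‖Complex.exp ((d : ℂ) * t)‖ = Real.exp (((d : ℂ) * t).re) from by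
        rw [Complex.norm_exp],
      show ((d : ℂ) * t).re = (d : ℝ) * t.re from by
        rw [show ((d : ℂ)) = (((d : ℝ) : ℂ)) from by push_cast; rfl, Complex.re_ofReal_mul],
      Real.exp_nat_mul]
  · -- differentiability
    rw [hRS]
    exact fun t ht => ((hS 0 ht).differentiableAt).differentiableWithinAt
  · -- the ODE
    intro t ht
    -- deriv on Hset eq lemmas
    have derivEqOn : ∀ {f g : ℂ → ℂ}, Set.EqOn f g Hset →
        ∀ {t : ℂ}, t ∈ Hset → deriv f t = deriv g t := by
      intro f g hfg t ht
      exact Filter.EventuallyEq.deriv_eq (Filter.eventuallyEq_of_mem (hopen.mem_nhds ht) hfg)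
    have E : ∀ k : ℕ, Set.EqOn (deriv (Sfun w k)) (Sfun w (k + 1)) Hset :=
      fun k x hx => (hS k hx).deriv
    -- fourth derivative
    have E2 : Set.EqOn (deriv (deriv (Sfun w 0))) (Sfun w 2) Hset :=
      fun x hx => (derivEqOn (E 0) hx).trans (E 1 hx)
    have E3 : Set.EqOn (deriv (deriv (deriv (Sfun w 0)))) (Sfun w 3) Hset :=
      fun x hx => (derivEqOn E2 hx).trans (E 2 hx)
    have E4 : Set.EqOn (deriv (deriv (deriv (deriv (Sfun w 0))))) (Sfun w 4) Hset :=
      fun x hx => (derivEqOn E3 hx).trans (E 3 hx)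
    -- DOp chain
    have hDOp : ∀ (c : ℂ) (f g g' : ℂ → ℂ), Set.EqOn f g Hset →
        (∀ x ∈ Hset, HasDerivAt g (g' x) x) →
        Set.EqOn (DOp c f) (fun x => g' x + c * g x) Hset := by
      intro c f g g' hfg hg x hx
      show deriv f x + c * f x = g' x + c * g x
      rw [derivEqOn hfg hx, (hg x hx).deriv, hfg hx]
    set g1 : ℂ → ℂ := fun x => Sfun w 1 x + (2/3 : ℂ) * Sfun w 0 x with hg1
    set g2 : ℂ → ℂ := fun x => Sfun w 2 x + (2/3 : ℂ) * Sfun w 1 x +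
      (2/3 : ℂ) * g1 x with hg2
    set g3 : ℂ → ℂ := fun x => Sfun w 3 x + (2/3 : ℂ) * Sfun w 2 x +
      (2/3 : ℂ) * (Sfun w 2 x + (2/3 : ℂ) * Sfun w 1 x) + (1/3 : ℂ) * g2 x with hg3
    have hg1' : ∀ x ∈ Hset, HasDerivAt g1 (Sfun w 2 x + (2/3 : ℂ) * Sfun w 1 x) x :=
      fun x hx => (hS 1 hx).add ((hS 0 hx).const_mul (2/3 : ℂ))
    have hg2' : ∀ x ∈ Hset, HasDerivAt g2
        (Sfun w 3 x + (2/3 : ℂ) * Sfun w 2 x +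
          (2/3 : ℂ) * (Sfun w 2 x + (2/3 : ℂ) * Sfun w 1 x)) x :=
      fun x hx => (((hS 2 hx).add ((hS 1 hx).const_mul (2/3 : ℂ))).add
        ((hg1' x hx).const_mul (2/3 : ℂ)))
    have hg3' : ∀ x ∈ Hset, HasDerivAt g3
        (Sfun w 4 x + (2/3 : ℂ) * Sfun w 3 x +
          (2/3 : ℂ) * (Sfun w 3 x + (2/3 : ℂ) * Sfun w 2 x) +
          (1/3 : ℂ) * (Sfun w 3 x + (2/3 : ℂ) * Sfun w 2 x +
            (2/3 : ℂ) * (Sfun w 2 x + (2/3 : ℂ) * Sfun w 1 x))) x :=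
      fun x hx => ((((hS 3 hx).add ((hS 2 hx).const_mul (2/3 : ℂ))).add
        (((hS 2 hx).add ((hS 1 hx).const_mul (2/3 : ℂ))).const_mul (2/3 : ℂ))).add
        ((hg2' x hx).const_mul (1/3 : ℂ)))
    have hA : Set.EqOn (DOp (2/3) (Rfun w)) g1 Hset := by
      have := hDOp (2/3) (Rfun w) (Sfun w 0) (Sfun w 1)
        (by rw [hRS]; exact fun x hx => rfl) (fun x hx => hS 0 hx)
      intro x hx
      rw [this hx, hg1]
    have hB : Set.EqOn (DOp (2/3) (DOp (2/3) (Rfun w))) g2 Hset := by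
      have := hDOp (2/3) (DOp (2/3) (Rfun w)) g1
        (fun x => Sfun w 2 x + (2/3 : ℂ) * Sfun w 1 x) hA hg1'
      intro x hx
      rw [this hx, hg2]
    have hC : Set.EqOn (DOp (1/3) (DOp (2/3) (DOp (2/3) (Rfun w)))) g3 Hset := by
      have := hDOp (1/3) (DOp (2/3) (DOp (2/3) (Rfun w))) g2 _ hB hg2'
      intro x hx
      rw [this hx, hg3]
    have hDfin : DOp (1/3) (DOp (1/3) (DOp (2/3) (DOp (2/3) (Rfun w)))) t =
        Sfun w 4 t + 2 * Sfun w 3 t + (13/9 : ℂ) * Sfun w 2 t +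
          (4/9 : ℂ) * Sfun w 1 t + (4/81 : ℂ) * Sfun w 0 t := by
      have := hDOp (1/3) (DOp (1/3) (DOp (2/3) (DOp (2/3) (Rfun w)))) g3 _ hC hg3' ht
      rw [this, hg3, hg2, hg1]
      ring
    -- fourth derivative of Rfun
    have h4 : deriv (deriv (deriv (deriv (Rfun w)))) t = Sfun w 4 t := by
      rw [hRS]; exact E4 ht
    -- summability of each component series
    have hsum : ∀ k : ℕ, Summable (fun d : ℕ =>
        aFun d w * (w + (d : ℂ)) ^ k * Complex.exp ((w + (d : ℂ)) * t)) :=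
      fun k => summable_term_at w hw k ht
    -- combine the five series into one
    have combo : Sfun w 4 t + 2 * Sfun w 3 t + (13/9 : ℂ) * Sfun w 2 t +
        (4/9 : ℂ) * Sfun w 1 t + (4/81 : ℂ) * Sfun w 0 t =
        ∑' d : ℕ, aFun d w * (((w + (d : ℂ)) + 1/3) ^ 2 * ((w + (d : ℂ)) + 2/3) ^ 2) *
          Complex.exp ((w + (d : ℂ)) * t) := by
      rw [Sfun, Sfun, Sfun, Sfun, Sfun, ← tsum_mul_left, ← tsum_mul_left, ← tsum_mul_left,
        ← tsum_mul_left]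
      rw [← Summable.tsum_add (hsum 4) ((hsum 3).mul_left 2),
        ← Summable.tsum_add (((hsum 4).add ((hsum 3).mul_left 2)))
          ((hsum 2).mul_left (13/9 : ℂ)),
        ← Summable.tsum_add ((((hsum 4).add ((hsum 3).mul_left 2)).add
          ((hsum 2).mul_left (13/9 : ℂ)))) ((hsum 1).mul_left (4/9 : ℂ)),
        ← Summable.tsum_add (((((hsum 4).add ((hsum 3).mul_left 2)).add
          ((hsum 2).mul_left (13/9 : ℂ))).add ((hsum 1).mul_left (4/9 : ℂ))))
          ((hsum 0).mul_left (4/81 : ℂ))]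
      congr 1
      funext d
      ring
    -- the shift identity
    have shift : (729 : ℂ) * Complex.exp t *
        (∑' d : ℕ, aFun d w * (((w + (d : ℂ)) + 1/3) ^ 2 * ((w + (d : ℂ)) + 2/3) ^ 2) *
          Complex.exp ((w + (d : ℂ)) * t)) =
        ∑' d : ℕ, aFun (d + 1) w * (w + ((d + 1 : ℕ) : ℂ)) ^ 4 *
          Complex.exp ((w + ((d + 1 : ℕ) : ℂ)) * t) := by
      rw [← tsum_mul_left]
      congr 1
      funext d
      have hrec := aFun_rec4 w hw d
      have hcast : ((d + 1 : ℕ) : ℂ) = (d : ℂ) + 1 := by push_cast; ring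
      rw [hcast]
      have hexp : Complex.exp ((w + ((d : ℂ) + 1)) * t) =
          Complex.exp ((w + (d : ℂ)) * t) * Complex.exp t := by
        rw [← Complex.exp_add]; ring_nf
      calc 729 * Complex.exp t *
          (aFun d w * (((w + (d : ℂ)) + 1/3) ^ 2 * ((w + (d : ℂ)) + 2/3) ^ 2) *
            Complex.exp ((w + (d : ℂ)) * t)) =
          (729 * aFun d w * ((w + (d : ℂ)) + 1/3) ^ 2 * ((w + (d : ℂ)) + 2/3) ^ 2) *
            (Complex.exp ((w + (d : ℂ)) * t) * Complex.exp t) := by ring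
        _ = (aFun (d + 1) w * (w + ((d : ℂ) + 1)) ^ 4) *
            (Complex.exp ((w + (d : ℂ)) * t) * Complex.exp t) := by rw [hrec]
        _ = aFun (d + 1) w * (w + ((d : ℂ) + 1)) ^ 4 *
            Complex.exp ((w + ((d : ℂ) + 1)) * t) := by rw [hexp]
    -- tsum zero-add
    have hzero : Sfun w 4 t =
        aFun 0 w * (w + ((0 : ℕ) : ℂ)) ^ 4 * Complex.exp ((w + ((0 : ℕ) : ℂ)) * t) +
        ∑' d : ℕ, aFun (d + 1) w * (w + ((d + 1 : ℕ) : ℂ)) ^ 4 *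
          Complex.exp ((w + ((d + 1 : ℕ) : ℂ)) * t) := by
      rw [Sfun]
      exact Summable.tsum_eq_zero_add (hsum 4)
    rw [h4, hDfin, combo, shift, hzero]
    rw [aFun_zero']
    push_cast
    rw [add_sub_cancel_right]
    simp
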